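/- arXiv:1702.02970 — 4 statements merged into one kernel-verified Lean document; each statement's English description precedes it below -/
import Mathlib

section
/- For every n, d ∈ ℕ and every λ ∈ (0,1), if X ∈ {±1}^{n×d} is drawn uniformly at random and d_λ = 2d·exp(−λ²·n/2), then P[ #{j ∈ [d] : q_j(X) > λ} > d_λ ] ≤ e^{−d_λ/6}. -/
open scoped ENNReal

noncomputable section

/-- The ±1 real value encoded by a Boolean (`true ↦ 1`, `false ↦ -1`). -/
def pmVal (b : Bool) : ℝ := if b then 1 else -1

/-- The `j`-th marginal of a dataset `X ∈ {±1}^{n×d}`. -/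
def marginal {n d : ℕ} (X : Fin n → Fin d → Bool) (j : Fin d) : ℝ :=
  (∑ i, pmVal (X i j)) / n


lemma sum_prod_cols {n : ℕ} (g : Bool → ℝ) :
    ∑ c : Fin n → Bool, ∏ i, g (c i) = (g true + g false) ^ n := by
  have h1 : (g true + g false) ^ n
      = ∏ _i : Fin n, ∑ b ∈ (Finset.univ : Finset Bool), g b := by
    simp [Fintype.sum_bool]
  rw [h1, Finset.prod_univ_sum, Fintype.piFinset_univ]

/-- Hoeffding-type bound for a single column. -/
lemma col_bound (n : ℕ) (lam : ℝ) (h0 : 0 < lam) :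
    ((Finset.univ.filter
        (fun c : Fin n → Bool => lam < (∑ i, pmVal (c i)) / n)).card : ℝ)
      ≤ 2 ^ n * Real.exp (-(lam ^ 2 * n) / 2) := by
  have key : ∀ c ∈ Finset.univ.filter
      (fun c : Fin n → Bool => lam < (∑ i, pmVal (c i)) / n),
      (1 : ℝ) ≤ Real.exp (lam * ((∑ i, pmVal (c i)) - lam * n)) := by
    intro c hc
    rw [Finset.mem_filter] at hc
    rcases Nat.eq_zero_or_pos n with hn | hn
    · exfalso; subst hn; simp at hc; linarith [hc]
    · have hn' : (0 : ℝ) < n := by exact_mod_cast hn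
      have h1 : lam * n < ∑ i, pmVal (c i) := by
        have := hc.2
        rw [lt_div_iff₀ hn'] at this
        linarith
      have h2 : 0 ≤ lam * ((∑ i, pmVal (c i)) - lam * n) := by nlinarith
      calc (1:ℝ) = Real.exp 0 := by simp
        _ ≤ _ := Real.exp_le_exp.2 h2
  have step1 : ((Finset.univ.filter
      (fun c : Fin n → Bool => lam < (∑ i, pmVal (c i)) / n)).card : ℝ)
      ≤ ∑ c : Fin n → Bool, Real.exp (lam * ((∑ i, pmVal (c i)) - lam * n)) := by
    calc ((Finset.univ.filter
        (fun c : Fin n → Bool => lam < (∑ i, pmVal (c i)) / n)).card : ℝ)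
        = ∑ _c ∈ Finset.univ.filter
            (fun c : Fin n → Bool => lam < (∑ i, pmVal (c i)) / n), (1:ℝ) := by simp
      _ ≤ ∑ c ∈ Finset.univ.filter
            (fun c : Fin n → Bool => lam < (∑ i, pmVal (c i)) / n),
            Real.exp (lam * ((∑ i, pmVal (c i)) - lam * n)) := Finset.sum_le_sum key
      _ ≤ _ := Finset.sum_le_sum_of_subset_of_nonneg (Finset.subset_univ _)
            (fun c _ _ => (Real.exp_pos _).le)
  have step2 : ∑ c : Fin n → Bool, Real.exp (lam * ((∑ i, pmVal (c i)) - lam * n))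
      = Real.exp (-(lam ^ 2 * n)) * (Real.exp lam + Real.exp (-lam)) ^ n := by
    have hterm : ∀ c : Fin n → Bool, Real.exp (lam * ((∑ i, pmVal (c i)) - lam * n))
        = Real.exp (-(lam ^ 2 * n)) * ∏ i, Real.exp (lam * pmVal (c i)) := by
      intro c
      rw [← Real.exp_sum, ← Real.exp_add]
      congr 1
      rw [← Finset.mul_sum]
      ring
    simp_rw [hterm, ← Finset.mul_sum]
    congr 1
    have := sum_prod_cols (n := n) (fun b => Real.exp (lam * pmVal b))
    rw [this]
    simp [pmVal]
  have step3 : (Real.exp lam + Real.exp (-lam)) ^ n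
      ≤ (2 * Real.exp (lam ^ 2 / 2)) ^ n := by
    apply pow_le_pow_left₀ (by positivity)
    have := Real.cosh_le_exp_half_sq lam
    rw [Real.cosh_eq] at this
    linarith
  have step4 : Real.exp (-(lam ^ 2 * n)) * (2 * Real.exp (lam ^ 2 / 2)) ^ n
      = 2 ^ n * Real.exp (-(lam ^ 2 * n) / 2) := by
    rw [mul_pow, ← Real.exp_nat_mul, mul_left_comm, ← Real.exp_add]
    congr 2
    ring
  calc ((Finset.univ.filter
      (fun c : Fin n → Bool => lam < (∑ i, pmVal (c i)) / n)).card : ℝ)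
      ≤ ∑ c : Fin n → Bool, Real.exp (lam * ((∑ i, pmVal (c i)) - lam * n)) := step1
    _ = Real.exp (-(lam ^ 2 * n)) * (Real.exp lam + Real.exp (-lam)) ^ n := step2
    _ ≤ Real.exp (-(lam ^ 2 * n)) * (2 * Real.exp (lam ^ 2 / 2)) ^ n := by
        apply mul_le_mul_of_nonneg_left step3 (Real.exp_pos _).le
    _ = _ := step4


lemma sum_prod_pi {d : ℕ} {γ : Type*} [Fintype γ] (h : γ → ℝ) :
    ∑ g : Fin d → γ, ∏ j, h (g j) = (∑ c, h c) ^ d := by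
  have h1 : (∑ c, h c) ^ d = ∏ _j : Fin d, ∑ c ∈ (Finset.univ : Finset γ), h c := by
    simp
  rw [h1, Finset.prod_univ_sum, Fintype.piFinset_univ]

lemma count_sum (n d : ℕ) (lam : ℝ) :
    ∑ X : Fin n → Fin d → Bool,
        ∏ j, (if lam < marginal X j then (2:ℝ) else 1)
      = ((2:ℝ) ^ n + ((Finset.univ.filter
          (fun c : Fin n → Bool => lam < (∑ i, pmVal (c i)) / n)).card : ℝ)) ^ d := by
  have e := Equiv.piComm (fun (_ : Fin n) (_ : Fin d) => Bool)
  have hswap : ∑ X : Fin n → Fin d → Bool,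
      ∏ j, (if lam < marginal X j then (2:ℝ) else 1)
      = ∑ g : Fin d → Fin n → Bool,
      ∏ j, (if lam < (∑ i, pmVal (g j i)) / n then (2:ℝ) else 1) :=
    Fintype.sum_equiv (Equiv.piComm (fun (_ : Fin n) (_ : Fin d) => Bool)) _ _
      (fun X => rfl)
  rw [hswap, sum_prod_pi (fun c : Fin n → Bool =>
    if lam < (∑ i, pmVal (c i)) / n then (2:ℝ) else 1)]
  congr 1
  have : ∀ c : Fin n → Bool,
      (if lam < (∑ i, pmVal (c i)) / n then (2:ℝ) else 1)
      = 1 + (if lam < (∑ i, pmVal (c i)) / n then (1:ℝ) else 0) := by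
    intro c; split <;> norm_num
  simp_rw [this, Finset.sum_add_distrib, Finset.sum_const, Finset.sum_boole]
  simp [Fintype.card_fun]

lemma main_count (n d : ℕ) (lam : ℝ) (h0 : 0 < lam)
    (dlam : ℝ) (hdlam : dlam = 2 * d * Real.exp (-(lam ^ 2 * n) / 2)) :
    ((Finset.univ.filter (fun X : Fin n → Fin d → Bool =>
        dlam < ((Finset.univ.filter (fun j => lam < marginal X j)).card : ℝ))).card : ℝ)
      ≤ 2 ^ (n * d) * Real.exp (-dlam / 6) := by
  set p : ℝ := Real.exp (-(lam ^ 2 * n) / 2) with hp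
  have hp0 : 0 < p := Real.exp_pos _
  have hdlam0 : 0 ≤ dlam := by rw [hdlam]; positivity
  -- pointwise bound: indicator ≤ 2^{-dlam} * ∏ (…)
  have key : ∀ X ∈ Finset.univ.filter (fun X : Fin n → Fin d → Bool =>
      dlam < ((Finset.univ.filter (fun j => lam < marginal X j)).card : ℝ)),
      (1:ℝ) ≤ (2:ℝ) ^ (-dlam) * ∏ j, (if lam < marginal X j then (2:ℝ) else 1) := by
    intro X hX
    rw [Finset.mem_filter] at hX
    have hprod : ∏ j, (if lam < marginal X j then (2:ℝ) else 1)
        = (2:ℝ) ^ ((Finset.univ.filter (fun j => lam < marginal X j)).card : ℕ) := by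
      rw [Finset.prod_ite, Finset.prod_const, Finset.prod_const, one_pow, mul_one]
    rw [hprod]
    have h1 : (2:ℝ) ^ dlam ≤ (2:ℝ) ^
        (((Finset.univ.filter (fun j => lam < marginal X j)).card : ℕ) : ℝ) :=
      Real.rpow_le_rpow_left_iff (by norm_num : (1:ℝ) < 2) |>.2 hX.2.le
    rw [Real.rpow_natCast] at h1
    have h2 : (2:ℝ) ^ (-dlam) * (2:ℝ) ^ dlam = 1 := by
      rw [← Real.rpow_add (by norm_num : (0:ℝ) < 2)]; norm_num
    calc (1:ℝ) = (2:ℝ) ^ (-dlam) * (2:ℝ) ^ dlam := h2.symm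
      _ ≤ _ := by
          have : (0:ℝ) ≤ (2:ℝ) ^ (-dlam) := (Real.rpow_pos_of_pos (by norm_num) _).le
          exact mul_le_mul_of_nonneg_left h1 this
  -- sum the indicator bound
  have step1 : ((Finset.univ.filter (fun X : Fin n → Fin d → Bool =>
      dlam < ((Finset.univ.filter (fun j => lam < marginal X j)).card : ℝ))).card : ℝ)
      ≤ (2:ℝ) ^ (-dlam) * ∑ X : Fin n → Fin d → Bool,
          ∏ j, (if lam < marginal X j then (2:ℝ) else 1) := by
    rw [Finset.mul_sum]
    calc ((Finset.univ.filter (fun X : Fin n → Fin d → Bool =>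
        dlam < ((Finset.univ.filter (fun j => lam < marginal X j)).card : ℝ))).card : ℝ)
        = ∑ _X ∈ Finset.univ.filter (fun X : Fin n → Fin d → Bool =>
            dlam < ((Finset.univ.filter (fun j => lam < marginal X j)).card : ℝ)), (1:ℝ) := by
          simp
      _ ≤ ∑ X ∈ Finset.univ.filter (fun X : Fin n → Fin d → Bool =>
            dlam < ((Finset.univ.filter (fun j => lam < marginal X j)).card : ℝ)),
            (2:ℝ) ^ (-dlam) * ∏ j, (if lam < marginal X j then (2:ℝ) else 1) :=
          Finset.sum_le_sum key
      _ ≤ _ := by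
          apply Finset.sum_le_sum_of_subset_of_nonneg (Finset.subset_univ _)
          intro X _ _
          have h2 : (0:ℝ) ≤ (2:ℝ) ^ (-dlam) := (Real.rpow_pos_of_pos (by norm_num) _).le
          have h3 : (0:ℝ) ≤ ∏ j, (if lam < marginal X j then (2:ℝ) else 1) :=
            Finset.prod_nonneg (fun j _ => by split <;> norm_num)
          exact mul_nonneg h2 h3
  rw [count_sum n d lam] at step1
  -- bound the base
  have hM : ((Finset.univ.filter
      (fun c : Fin n → Bool => lam < (∑ i, pmVal (c i)) / n)).card : ℝ) ≤ 2 ^ n * p :=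
    col_bound n lam h0
  have hbase : ((2:ℝ) ^ n + ((Finset.univ.filter
      (fun c : Fin n → Bool => lam < (∑ i, pmVal (c i)) / n)).card : ℝ)) ^ d
      ≤ ((2:ℝ) ^ n) ^ d * (1 + p) ^ d := by
    rw [← mul_pow]
    apply pow_le_pow_left₀ (by positivity)
    nlinarith
  have hexp : ((1:ℝ) + p) ^ d ≤ Real.exp (dlam / 2) := by
    have h1 : (1:ℝ) + p ≤ Real.exp p := by
      have := Real.add_one_le_exp p; linarith
    calc ((1:ℝ) + p) ^ d ≤ (Real.exp p) ^ d :=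
        pow_le_pow_left₀ (by positivity) h1 d
      _ = Real.exp (d * p) := by rw [← Real.exp_nat_mul]
      _ = Real.exp (dlam / 2) := by rw [hdlam]; ring_nf
  -- final combination
  have hfinal : (2:ℝ) ^ (-dlam) * (((2:ℝ) ^ n) ^ d * Real.exp (dlam / 2))
      ≤ 2 ^ (n * d) * Real.exp (-dlam / 6) := by
    rw [← pow_mul]
    have hlog : (2:ℝ) ^ (-dlam) = Real.exp (Real.log 2 * (-dlam)) := by
      rw [Real.rpow_def_of_pos (by norm_num)]
    rw [hlog, mul_comm (Real.exp (Real.log 2 * (-dlam))), mul_assoc, ← Real.exp_add]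
    apply mul_le_mul_of_nonneg_left _ (by positivity)
    apply Real.exp_le_exp.2
    have := Real.log_two_gt_d9
    nlinarith
  calc ((Finset.univ.filter (fun X : Fin n → Fin d → Bool =>
      dlam < ((Finset.univ.filter (fun j => lam < marginal X j)).card : ℝ))).card : ℝ)
      ≤ (2:ℝ) ^ (-dlam) * ((2:ℝ) ^ n + _) ^ d := step1
    _ ≤ (2:ℝ) ^ (-dlam) * (((2:ℝ) ^ n) ^ d * (1 + p) ^ d) := by
        apply mul_le_mul_of_nonneg_left hbase (Real.rpow_pos_of_pos (by norm_num) _).le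
    _ ≤ (2:ℝ) ^ (-dlam) * (((2:ℝ) ^ n) ^ d * Real.exp (dlam / 2)) := by
        apply mul_le_mul_of_nonneg_left _ (Real.rpow_pos_of_pos (by norm_num) _).le
        apply mul_le_mul_of_nonneg_left hexp (by positivity)
    _ ≤ _ := hfinal

/-- For a uniformly random `X ∈ {±1}^{n×d}` and `λ ∈ (0,1)`, the number of columns whose
marginal exceeds `λ` is at most `d_λ := 2d·e^{-λ²n/2}` except with probability
`e^{-d_λ/6}`. -/
theorem few_large_marginals (n d : ℕ) (lam : ℝ) (hlam : lam ∈ Set.Ioo (0:ℝ) 1)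
    (dlam : ℝ) (hdlam : dlam = 2 * d * Real.exp (-(lam ^ 2 * n) / 2)) :
    (PMF.uniformOfFintype (Fin n → Fin d → Bool)).toOuterMeasure
        {X | dlam < ((Finset.univ.filter (fun j => lam < marginal X j)).card : ℝ)} ≤
      ENNReal.ofReal (Real.exp (-dlam / 6)) := by
  have hcard : Fintype.card (Fin n → Fin d → Bool) = 2 ^ (n * d) := by
    simp [Fintype.card_fun, ← pow_mul, mul_comm]
  have hmeas : (PMF.uniformOfFintype (Fin n → Fin d → Bool)).toOuterMeasure
      {X | dlam < ((Finset.univ.filter (fun j => lam < marginal X j)).card : ℝ)}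
      = ((Finset.univ.filter (fun X : Fin n → Fin d → Bool =>
          dlam < ((Finset.univ.filter (fun j => lam < marginal X j)).card : ℝ))).card : ℝ≥0∞)
        * ((2 : ℝ≥0∞) ^ (n * d))⁻¹ := by
    rw [PMF.toOuterMeasure_apply, tsum_fintype]
    simp only [Set.indicator_apply, Set.mem_setOf_eq, PMF.uniformOfFintype_apply, hcard]
    rw [Finset.sum_ite, Finset.sum_const, Finset.sum_const_zero, add_zero, nsmul_eq_mul]
    push_cast
    ring
  rw [hmeas]
  have h2 : ((2 : ℝ≥0∞) ^ (n * d))⁻¹ = ENNReal.ofReal ((2:ℝ) ^ (n * d))⁻¹ := by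
    rw [ENNReal.ofReal_inv_of_pos (by positivity)]
    congr 1
    rw [ENNReal.ofReal_pow (by norm_num)]
    norm_num
  rw [h2, show ((Finset.univ.filter (fun X : Fin n → Fin d → Bool =>
      dlam < ((Finset.univ.filter (fun j => lam < marginal X j)).card : ℝ))).card : ℝ≥0∞)
      = ENNReal.ofReal ((Finset.univ.filter (fun X : Fin n → Fin d → Bool =>
      dlam < ((Finset.univ.filter (fun j => lam < marginal X j)).card : ℝ))).card : ℝ) by
        rw [ENNReal.ofReal_natCast],
    ← ENNReal.ofReal_mul (by positivity)]
  apply ENNReal.ofReal_le_ofReal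
  rw [mul_inv_le_iff₀ (by positivity)]
  calc ((Finset.univ.filter (fun X : Fin n → Fin d → Bool =>
      dlam < ((Finset.univ.filter (fun j => lam < marginal X j)).card : ℝ))).card : ℝ)
      ≤ 2 ^ (n * d) * Real.exp (-dlam / 6) := main_count n d lam hlam.1 dlam hdlam
    _ = Real.exp (-dlam / 6) * 2 ^ (n * d) := by ring
end
end

section
/- Let n ∈ ℕ and let s be an integer with |s| ≤ n and s ≡ n (mod 2). Let x = (x_1,…,x_n) be uniformly distributed over { z ∈ {±1}^n : Σ_{i=1}^n z_i = s }. Then for every subset B ⊆ [n], P[ for all b ∈ B, x_b = −1 ] ≤ Π_{b ∈ B} P[ x_b = −1 ]; that is, the entries of a uniformly random ±1 vector with fixed sum are positively correlated in the sense that the probability they are simultaneously −1 is at most the product of the individual probabilities. -/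
open scoped ENNReal

noncomputable section

/-- Sum of `pmVal`s in terms of the number of `false` coordinates. -/
lemma pmVal_sum_eq (n : ℕ) (z : Fin n → Bool) :
    ∑ i, pmVal (z i) =
      (n : ℝ) - 2 * ((Finset.univ.filter (fun i => z i = false)).card : ℝ) := by
  have h : ∀ i, pmVal (z i) = 1 - 2 * (if z i = false then (1 : ℝ) else 0) := by
    intro i; cases z i <;> norm_num [pmVal]
  rw [Finset.sum_congr rfl fun i _ => h i]
  rw [Finset.sum_sub_distrib, ← Finset.mul_sum, Finset.sum_boole]
  simp

/-- Counting boolean vectors with `m` false coordinates, all of `B` false. -/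
lemma count_falses (n m : ℕ) (B : Finset (Fin n)) (hB : B.card ≤ m) :
    (Finset.univ.filter (fun z : Fin n → Bool =>
      (Finset.univ.filter (fun i => z i = false)).card = m ∧ ∀ b ∈ B, z b = false)).card
      = (n - B.card).choose (m - B.card) := by
  have hcard : (Finset.univ \ B).card = n - B.card := by
    rw [Finset.card_sdiff_of_subset (Finset.subset_univ B)]; simp
  rw [← hcard, ← Finset.card_powersetCard]
  apply Finset.card_bij' (fun z _ => (Finset.univ.filter (fun i => z i = false)) \ B)
    (fun T _ => fun i => !(decide (i ∈ T ∪ B)))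
  · intro z hz
    simp only [Finset.mem_filter, Finset.mem_univ, true_and] at hz
    obtain ⟨hm, hall⟩ := hz
    rw [Finset.mem_powersetCard]
    constructor
    · exact Finset.sdiff_subset_sdiff (Finset.subset_univ _) le_rfl
    · rw [Finset.card_sdiff_of_subset, hm]
      intro b hb
      simp [hall b hb]
  · intro T hT
    rw [Finset.mem_powersetCard] at hT
    obtain ⟨hTs, hTc⟩ := hT
    have hdisj : Disjoint T B := by
      intro U hUT hUB
      intro x hx
      have h1 := hTs (hUT hx)
      rw [Finset.mem_sdiff] at h1
      exact absurd (hUB hx) h1.2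
    have hfe : (Finset.univ.filter (fun i => (!(decide (i ∈ T ∪ B))) = false)) = T ∪ B := by
      ext i; simp; tauto
    simp only [Finset.mem_filter, Finset.mem_univ, true_and]
    refine ⟨?_, ?_⟩
    · rw [hfe, Finset.card_union_of_disjoint hdisj, hTc]
      omega
    · intro b hb; simp [Finset.mem_union, hb]
  · intro z hz
    simp only [Finset.mem_filter, Finset.mem_univ, true_and] at hz
    obtain ⟨hm, hall⟩ := hz
    have hBsub : B ⊆ Finset.univ.filter (fun i => z i = false) := by
      intro b hb; simp [hall b hb]
    funext i
    rw [Finset.sdiff_union_of_subset hBsub]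
    by_cases h : z i = false <;> simp [h]
  · intro T hT
    rw [Finset.mem_powersetCard] at hT
    obtain ⟨hTs, hTc⟩ := hT
    have hdisj : Disjoint T B := by
      intro U hUT hUB x hx
      have h1 := hTs (hUT hx)
      rw [Finset.mem_sdiff] at h1
      exact absurd (hUB hx) h1.2
    have hfe : (Finset.univ.filter (fun i => (!(decide (i ∈ T ∪ B))) = false)) = T ∪ B := by
      ext i; simp; tauto
    rw [hfe, Finset.union_sdiff_right, Finset.sdiff_eq_self_of_disjoint hdisj]

/-- The key binomial inequality. -/
lemma choose_ineq (n m k : ℕ) (hk : k ≤ m) (hm : m ≤ n) :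
    (n - k).choose (m - k) * n ^ k ≤ n.choose m * m ^ k := by
  induction k with
  | zero => simp
  | succ k ih =>
    have hk' : k ≤ m := Nat.le_of_succ_le hk
    have ih' := ih hk'
    have hkm : k < m := hk
    have hkn : k < n := lt_of_lt_of_le hkm hm
    have hid : (n - k) * ((n - (k+1)).choose (m - (k+1))) =
        (n - k).choose (m - k) * (m - k) := by
      have h1 : n - k = (n - (k+1)) + 1 := by omega
      have h2 : m - k = (m - (k+1)) + 1 := by omega
      rw [h1, h2]
      exact Nat.add_one_mul_choose_eq _ _
    refine Nat.le_of_mul_le_mul_left ?_ (show 0 < n - k by omega)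
    calc (n - k) * ((n - (k+1)).choose (m - (k+1)) * n ^ (k+1))
          = ((n - k) * (n - (k+1)).choose (m - (k+1))) * n ^ (k+1) := by ring
        _ = ((n - k).choose (m - k) * (m - k)) * n ^ (k+1) := by rw [hid]
        _ = ((m - k) * n) * ((n - k).choose (m - k) * n ^ k) := by ring
        _ ≤ ((m - k) * n) * (n.choose m * m ^ k) := Nat.mul_le_mul_left _ ih'
        _ ≤ ((n - k) * m) * (n.choose m * m ^ k) := by
            apply Nat.mul_le_mul_right
            have : k * m ≤ k * n := Nat.mul_le_mul_left k hm
            calc (m - k) * n = m * n - k * n := Nat.sub_mul m k n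
              _ ≤ m * n - k * m := by omega
              _ = (n - k) * m := by rw [Nat.sub_mul]; ring_nf
        _ = (n - k) * (n.choose m * m ^ (k+1)) := by ring

/-- The entries of a uniformly random ±1 vector with fixed sum `s` are positively
correlated: for every `B ⊆ [n]`, the probability that `x_b = -1` for all `b ∈ B` is at
most the product of the individual probabilities `P[x_b = -1]`. -/
theorem fixed_sum_positively_correlated (n : ℕ) (s : ℤ)
    (hs : |s| ≤ (n : ℤ)) (hpar : s % 2 = (n : ℤ) % 2)
    (S : Finset (Fin n → Bool))
    (hS : S = Finset.univ.filter (fun z => ∑ i, pmVal (z i) = (s : ℝ)))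
    (hSne : S.Nonempty) (B : Finset (Fin n)) :
    (PMF.uniformOfFinset S hSne).toOuterMeasure {x | ∀ b ∈ B, pmVal (x b) = -1} ≤
      ∏ b ∈ B, (PMF.uniformOfFinset S hSne).toOuterMeasure {x | pmVal (x b) = -1} := by
  classical
  obtain ⟨z0, hz0⟩ := hSne
  set m := (Finset.univ.filter (fun i => z0 i = false)).card with hmdef
  have hmn : m ≤ n := by
    simpa using Finset.card_filter_le (Finset.univ : Finset (Fin n)) (fun i => z0 i = false)
  have hz0s : ∑ i, pmVal (z0 i) = (s : ℝ) := by
    rw [hS] at hz0; simpa using hz0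
  have hpm : ∀ (c : Bool), (pmVal c = -1) ↔ c = false := by
    intro c; cases c <;> norm_num [pmVal]
  have hSeq : S = Finset.univ.filter
      (fun z : Fin n → Bool => (Finset.univ.filter (fun i => z i = false)).card = m) := by
    rw [hS]; ext z
    simp only [Finset.mem_filter, Finset.mem_univ, true_and]
    rw [pmVal_sum_eq, ← hz0s, pmVal_sum_eq]
    constructor
    · intro h
      have : ((Finset.univ.filter (fun i => z i = false)).card : ℝ) = (m : ℝ) := by linarith
      exact_mod_cast this
    · intro h; rw [h]
  have hN : S.card = n.choose m := by
    have h0 := count_falses n m ∅ (Nat.zero_le m)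
    rw [hSeq]
    simp only [Finset.notMem_empty, false_implies, implies_true, and_true,
      Finset.card_empty, Nat.sub_zero] at h0
    exact h0
  have hN0 : (S.card : ℝ≥0∞) ≠ 0 := by
    simp only [ne_eq, Nat.cast_eq_zero, Finset.card_eq_zero]
    intro h; rw [h] at hz0; exact absurd hz0 (Finset.notMem_empty z0)
  have hNtop : (S.card : ℝ≥0∞) ≠ ∞ := ENNReal.natCast_ne_top _
  -- rewrite LHS
  have hLHS : (PMF.uniformOfFinset S ⟨z0, hz0⟩).toOuterMeasure {x | ∀ b ∈ B, pmVal (x b) = -1}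
      = ((Finset.univ.filter (fun z : Fin n → Bool =>
          (Finset.univ.filter (fun i => z i = false)).card = m ∧
          ∀ b ∈ B, z b = false)).card : ℝ≥0∞) / S.card := by
    rw [PMF.toOuterMeasure_uniformOfFinset_apply (hs := ⟨z0, hz0⟩)]
    congr 2
    rw [hSeq, Finset.filter_filter]
    refine congrArg Finset.card ?_
    ext z
    simp [hpm, Set.mem_setOf_eq]
  have hRHS : ∀ b : Fin n, (PMF.uniformOfFinset S ⟨z0, hz0⟩).toOuterMeasure {x | pmVal (x b) = -1}
      = ((Finset.univ.filter (fun z : Fin n → Bool =>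
          (Finset.univ.filter (fun i => z i = false)).card = m ∧
          z b = false)).card : ℝ≥0∞) / S.card := by
    intro b
    rw [PMF.toOuterMeasure_uniformOfFinset_apply (hs := ⟨z0, hz0⟩)]
    congr 2
    rw [hSeq, Finset.filter_filter]
    refine congrArg Finset.card ?_
    ext z
    simp [hpm, Set.mem_setOf_eq]
  rcases B.eq_empty_or_nonempty with hB | hB
  · subst hB
    simp only [Finset.prod_empty]
    rw [hLHS]
    rw [ENNReal.div_le_iff hN0 hNtop, one_mul]
    rw [Nat.cast_le]
    apply Finset.card_le_card
    intro z hz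
    rw [hSeq]
    simp only [Finset.mem_filter, Finset.mem_univ, true_and] at hz ⊢
    exact hz.1
  · -- B nonempty
    obtain ⟨b0, hb0⟩ := hB
    have hn1 : 1 ≤ n := b0.pos
    rcases Nat.eq_zero_or_pos m with hm0 | hm1
    · -- m = 0 : LHS numerator is zero
      rw [hLHS]
      have : (Finset.univ.filter (fun z : Fin n → Bool =>
          (Finset.univ.filter (fun i => z i = false)).card = m ∧
          ∀ b ∈ B, z b = false)) = ∅ := by
        rw [Finset.filter_eq_empty_iff]
        rintro z - ⟨hc, hall⟩
        rw [hm0, Finset.card_eq_zero] at hc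
        have : b0 ∈ Finset.univ.filter (fun i => z i = false) := by
          simp [hall b0 hb0]
        rw [hc] at this
        exact absurd this (Finset.notMem_empty _)
      rw [this]
      simp
    · -- m ≥ 1
      have hone : ∀ b : Fin n, (Finset.univ.filter (fun z : Fin n → Bool =>
          (Finset.univ.filter (fun i => z i = false)).card = m ∧
          z b = false)).card = (n - 1).choose (m - 1) := by
        intro b
        have h1 := count_falses n m {b} (by simpa using Nat.succ_le_of_lt hm1)
        simp only [Finset.mem_singleton, forall_eq, Finset.card_singleton] at h1
        exact h1
      have hkey : ∀ b : Fin n,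
          (((n - 1).choose (m - 1) : ℝ≥0∞)) / (S.card : ℝ≥0∞) = (m : ℝ≥0∞) / (n : ℝ≥0∞) := by
        intro b
        rw [ENNReal.div_eq_div_iff (show ((n:ℝ≥0∞)) ≠ 0 from Nat.cast_ne_zero.mpr (by omega)) (ENNReal.natCast_ne_top n) hN0 hNtop]
        rw [hN, ← Nat.cast_mul, ← Nat.cast_mul, Nat.cast_inj]
        have h2 : n = (n - 1) + 1 := by omega
        have h3 : m = (m - 1) + 1 := by omega
        calc n * (n - 1).choose (m - 1) = ((n-1)+1) * (n - 1).choose (m - 1) := by rw [← h2]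
          _ = (n-1+1).choose (m-1+1) * (m-1+1) := Nat.add_one_mul_choose_eq _ _
          _ = n.choose m * m := by rw [← h2, ← h3]
      rw [hLHS]
      have hprod : ∏ b ∈ B, (PMF.uniformOfFinset S ⟨z0, hz0⟩).toOuterMeasure
          {x | pmVal (x b) = -1} = ((m : ℝ≥0∞) / n) ^ B.card := by
        rw [Finset.prod_congr rfl (fun b _ => by rw [hRHS b, hone b, hkey b])]
        exact Finset.prod_const _
      rw [hprod]
      set k := B.card with hk
      rcases le_or_gt k m with hkm | hkm
      · -- main case
        have hcount := count_falses n m B hkm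
        rw [← hk] at hcount
        rw [hcount]
        have hn0 : ((n : ℝ≥0∞)) ≠ 0 := Nat.cast_ne_zero.mpr (Nat.one_le_iff_ne_zero.mp hn1)
        have hntop : ((n : ℝ≥0∞)) ≠ ∞ := ENNReal.natCast_ne_top n
        have hnk0 : ((n : ℝ≥0∞)) ^ k ≠ 0 := pow_ne_zero k hn0
        have hnktop : ((n : ℝ≥0∞)) ^ k ≠ ∞ := by
          exact ENNReal.pow_ne_top hntop
        have hstep : ((m : ℝ≥0∞) / n) ^ k = ((m : ℝ≥0∞) ^ k) / ((n : ℝ≥0∞) ^ k) := by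
          rw [div_eq_mul_inv, mul_pow, ← ENNReal.inv_pow, div_eq_mul_inv]
        rw [hstep]
        rw [ENNReal.le_div_iff_mul_le (Or.inl hnk0) (Or.inl hnktop)]
        calc (((n - k).choose (m - k) : ℝ≥0∞)) / ↑S.card * ↑n ^ k
              = (((n - k).choose (m - k) : ℝ≥0∞) * ↑n ^ k) / ↑S.card := by
                rw [div_eq_mul_inv, div_eq_mul_inv]; ring
            _ ≤ ((m : ℝ≥0∞) ^ k) := by
                rw [ENNReal.div_le_iff hN0 hNtop, hN]
                rw [← Nat.cast_pow, ← Nat.cast_mul, ← Nat.cast_pow, ← Nat.cast_mul, Nat.cast_le]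
                rw [Nat.mul_comm (m ^ k)]
                exact choose_ineq n m k hkm hmn
      · -- k > m : numerator is zero
        have : (Finset.univ.filter (fun z : Fin n → Bool =>
            (Finset.univ.filter (fun i => z i = false)).card = m ∧
            ∀ b ∈ B, z b = false)) = ∅ := by
          rw [Finset.filter_eq_empty_iff]
          rintro z - ⟨hc, hall⟩
          have hsub : B ⊆ Finset.univ.filter (fun i => z i = false) := by
            intro b hb; simp [hall b hb]
          have := Finset.card_le_card hsub
          omega
        rw [this]
        simp
end
end

section
/- Let n ∈ ℕ and let s ≥ 0 be an integer with s ≤ n and s ≡ n (mod 2). Let x = (x_1,…,x_n) be uniformly distributed over { z ∈ {±1}^n : Σ_{i=1}^n z_i = s }. Then for every subset B ⊆ [n] and every a ∈ [n] \ B such that the event { x_b = −1 for all b ∈ B } has positive probability, the conditional expectation satisfies E[ x_a | x_b = −1 for all b ∈ B ] ≥ s/n = E[x_a]. -/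
open scoped ENNReal

noncomputable section

lemma card_filter_comp {α : Type*} [Fintype α] [DecidableEq α] (σ : Equiv.Perm α)
    (p : α → Prop) [DecidablePred p] :
    (Finset.univ.filter fun j => p (σ j)).card = (Finset.univ.filter p).card := by
  apply Finset.card_bij (fun j _ => σ j)
  · intro a ha; simp at ha ⊢; exact ha
  · intro a _ b _ h; exact σ.injective h
  · intro b hb
    refine ⟨σ.symm b, ?_, by simp⟩
    simp at hb ⊢; simpa using hb

lemma swap_count {n K : ℕ} {C : Finset (Fin n)} {T : Finset (Fin n → Bool)}
    (hT : ∀ z : Fin n → Bool,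
      z ∈ T ↔ ((Finset.univ.filter fun i => z i = true).card = K ∧ ∀ j ∉ C, z j = false))
    {a i : Fin n} (ha : a ∈ C) (hi : i ∈ C) :
    (T.filter fun z => z a = true).card = (T.filter fun z => z i = true).card := by
  have key : ∀ z : Fin n → Bool, z ∈ T → (fun j => z (Equiv.swap a i j)) ∈ T := by
    intro z hz
    rw [hT] at hz ⊢
    refine ⟨?_, ?_⟩
    · rw [card_filter_comp (Equiv.swap a i) (fun j => z j = true)]; exact hz.1
    · intro j hj
      have hja : j ≠ a := fun h => hj (h ▸ ha)
      have hji : j ≠ i := fun h => hj (h ▸ hi)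
      simp only [Equiv.swap_apply_of_ne_of_ne hja hji]
      exact hz.2 j hj
  apply Finset.card_bij' (fun z _ => fun j => z (Equiv.swap a i j))
      (fun z _ => fun j => z (Equiv.swap a i j))
  · intro z hz
    simp only [Finset.mem_filter] at hz ⊢
    exact ⟨key z hz.1, by simpa using hz.2⟩
  · intro z hz
    simp only [Finset.mem_filter] at hz ⊢
    exact ⟨key z hz.1, by simpa using hz.2⟩
  · intro z _; funext j; simp
  · intro z _; funext j; simp

lemma key_count {n K : ℕ} {C : Finset (Fin n)} {T : Finset (Fin n → Bool)}
    (hT : ∀ z : Fin n → Bool,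
      z ∈ T ↔ ((Finset.univ.filter fun i => z i = true).card = K ∧ ∀ j ∉ C, z j = false))
    {a : Fin n} (ha : a ∈ C) :
    C.card * (T.filter fun z => z a = true).card = K * T.card := by
  have h1 : ∑ i ∈ C, (T.filter fun z => z i = true).card
      = C.card * (T.filter fun z => z a = true).card := by
    calc ∑ i ∈ C, (T.filter fun z => z i = true).card
        = ∑ _i ∈ C, (T.filter fun z => z a = true).card :=
          Finset.sum_congr rfl (fun i hi => swap_count hT hi ha)
      _ = C.card * (T.filter fun z => z a = true).card := by
          rw [Finset.sum_const, smul_eq_mul]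
  have h2 : ∑ i ∈ C, (T.filter fun z => z i = true).card = K * T.card := by
    have swap : ∑ i ∈ C, (T.filter fun z => z i = true).card
        = ∑ z ∈ T, (C.filter fun i => z i = true).card := by
      simp only [Finset.card_filter]
      rw [Finset.sum_comm]
    rw [swap]
    have : ∀ z ∈ T, (C.filter fun i => z i = true).card = K := by
      intro z hz
      rw [hT] at hz
      have : (C.filter fun i => z i = true) = (Finset.univ.filter fun i => z i = true) := by
        ext i
        simp only [Finset.mem_filter, Finset.mem_univ, true_and]
        refine ⟨fun h => h.2, fun h => ⟨?_, h⟩⟩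
        by_contra hiC
        have := hz.2 i hiC
        simp [this] at h
      rw [this, hz.1]
    calc ∑ z ∈ T, (C.filter fun i => z i = true).card
        = ∑ _z ∈ T, K := Finset.sum_congr rfl this
      _ = K * T.card := by rw [Finset.sum_const, smul_eq_mul, mul_comm]
  rw [← h1]; exact h2

lemma sum_pm {n : ℕ} (T : Finset (Fin n → Bool)) (a : Fin n) :
    ∑ z ∈ T, pmVal (z a) = 2 * ((T.filter fun z => z a = true).card : ℝ) - T.card := by
  have : ∀ z : Fin n → Bool, pmVal (z a) = 2 * (if z a = true then (1:ℝ) else 0) - 1 := by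
    intro z; cases z a <;> norm_num [pmVal]
  rw [Finset.sum_congr rfl (fun z _ => this z), Finset.sum_sub_distrib, ← Finset.mul_sum,
    Finset.sum_boole, Finset.sum_const]
  push_cast
  ring

/-- Let `x` be uniform over `{z ∈ {±1}^n : Σᵢ zᵢ = s}` with `0 ≤ s ≤ n`, `s ≡ n (mod 2)`.
For every `B ⊆ [n]` and `a ∉ B` such that the event `{x_b = -1 for all b ∈ B}` has
positive probability (i.e. the conditioned set `SB` is nonempty), the conditional
expectation of `x_a` given that event — the average of `x_a` over `SB` — is at least
`s/n`, which equals the unconditional expectation `E[x_a]` — the average of `x_a` over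
`S`. -/
theorem conditional_expectation_fixed_sum (n : ℕ) (s : ℤ)
    (hs0 : 0 ≤ s) (hsn : s ≤ (n : ℤ)) (hpar : s % 2 = (n : ℤ) % 2)
    (S : Finset (Fin n → Bool))
    (hS : S = Finset.univ.filter (fun z => ∑ i, pmVal (z i) = (s : ℝ)))
    (B : Finset (Fin n)) (a : Fin n) (ha : a ∉ B)
    (SB : Finset (Fin n → Bool))
    (hSB : SB = S.filter (fun z => ∀ b ∈ B, pmVal (z b) = -1))
    (hpos : SB.Nonempty) :
    (s : ℝ) / n ≤ (∑ z ∈ SB, pmVal (z a)) / SB.card ∧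
    (∑ z ∈ S, pmVal (z a)) / S.card = (s : ℝ) / n := by
  classical
  have hn : 0 < n := a.pos
  -- K : number of true coordinates
  have heven : (2:ℤ) ∣ ((n:ℤ) + s) := by omega
  obtain ⟨k, hk⟩ := heven
  have hk0 : 0 ≤ k := by omega
  set K : ℕ := k.toNat with hKdef
  have h2K : 2 * (K:ℤ) = (n:ℤ) + s := by omega
  have h2K' : 2 * (K:ℝ) = (n:ℝ) + (s:ℝ) := by exact_mod_cast h2K
  -- coordinate-sum characterization
  have hsumz : ∀ z : Fin n → Bool,
      ∑ i, pmVal (z i) = 2 * ((Finset.univ.filter fun i => z i = true).card : ℝ) - n := by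
    intro z
    have : ∀ i : Fin n, pmVal (z i) = 2 * (if z i = true then (1:ℝ) else 0) - 1 := by
      intro i; cases z i <;> norm_num [pmVal]
    rw [Finset.sum_congr rfl (fun i _ => this i), Finset.sum_sub_distrib, ← Finset.mul_sum,
      Finset.sum_boole, Finset.sum_const, Finset.card_univ, Fintype.card_fin]
    push_cast; ring
  have hchar : ∀ z : Fin n → Bool,
      (∑ i, pmVal (z i) = (s:ℝ)) ↔ (Finset.univ.filter fun i => z i = true).card = K := by
    intro z
    rw [hsumz z]
    constructor
    · intro h
      have : 2 * (((Finset.univ.filter fun i => z i = true).card : ℤ)) - n = s := by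
        exact_mod_cast h
      omega
    · intro h; rw [h]; linarith [h2K']
  -- membership characterizations
  have hS' : ∀ z : Fin n → Bool, z ∈ S ↔
      ((Finset.univ.filter fun i => z i = true).card = K ∧
        ∀ j ∉ (Finset.univ : Finset (Fin n)), z j = false) := by
    intro z
    simp only [hS, Finset.mem_filter, Finset.mem_univ, true_and, hchar z]
    refine ⟨fun h => ⟨h, fun j hj => absurd trivial hj⟩, fun h => h.1⟩
  have hSB' : ∀ z : Fin n → Bool, z ∈ SB ↔
      ((Finset.univ.filter fun i => z i = true).card = K ∧ ∀ j ∉ Bᶜ, z j = false) := by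
    intro z
    simp only [hSB, Finset.mem_filter, hS' z, Finset.mem_compl, not_not]
    constructor
    · rintro ⟨⟨h1, -⟩, h2⟩
      refine ⟨h1, fun j hj => ?_⟩
      have := h2 j hj
      cases hzj : z j
      · rfl
      · rw [hzj] at this; norm_num [pmVal] at this
    · rintro ⟨h1, h2⟩
      refine ⟨⟨h1, fun j hj => absurd (Finset.mem_univ j) hj⟩, fun b hb => ?_⟩
      rw [h2 b hb]; norm_num [pmVal]
  have haC : a ∈ Bᶜ := Finset.mem_compl.2 ha
  -- counting identities
  have hK1 := key_count hS' (Finset.mem_univ a)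
  have hK2 := key_count hSB' haC
  rw [Finset.card_univ, Fintype.card_fin] at hK1
  set N := (S.filter fun z => z a = true).card with hN
  set M := (SB.filter fun z => z a = true).card with hM
  set m := Bᶜ.card with hm
  have hSBsub : SB ⊆ S := by rw [hSB]; exact Finset.filter_subset _ _
  have hcSB : 0 < SB.card := Finset.card_pos.2 hpos
  have hcS : 0 < S.card := Finset.card_pos.2 (hpos.mono hSBsub)
  have hmn : m ≤ n := by
    calc m ≤ Fintype.card (Fin n) := Finset.card_le_univ _
    _ = n := Fintype.card_fin n
  have hmpos : 0 < m := Finset.card_pos.2 ⟨a, haC⟩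
  -- real versions
  have hK1R : (n:ℝ) * N = K * S.card := by exact_mod_cast hK1
  have hK2R : (m:ℝ) * M = K * SB.card := by exact_mod_cast hK2
  have hnR : (0:ℝ) < n := by exact_mod_cast hn
  have hmR : (0:ℝ) < m := by exact_mod_cast hmpos
  have hmnR : (m:ℝ) ≤ n := by exact_mod_cast hmn
  have hcSR : (0:ℝ) < S.card := by exact_mod_cast hcS
  have hcSBR : (0:ℝ) < SB.card := by exact_mod_cast hcSB
  have hKR : (0:ℝ) ≤ K := by positivity
  have hsR : (0:ℝ) ≤ s := by exact_mod_cast hs0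
  constructor
  · rw [sum_pm SB a, ← hM, div_le_div_iff₀ hnR hcSBR]
    nlinarith [mul_nonneg (mul_nonneg hcSBR.le (sub_nonneg.2 hmnR)) (by linarith : (0:ℝ) ≤ (s:ℝ) + n),
      hK2R, mul_pos hmR hcSBR]
  · rw [sum_pm S a, ← hN, div_eq_div_iff hcSR.ne' hnR.ne']
    linear_combination 2 * hK1R + (S.card : ℝ) * h2K'
end
end

section
/- Let n, k ∈ ℕ, let λ ∈ [0,1] with λ·n an integer having the same parity as n, and let ρ ∈ (0,1). Let X ∈ {±1}^{n×k} be a random matrix whose k columns are mutually independent, with each column uniformly distributed over { z ∈ {±1}^n : Σ_{i=1}^n z_i = λ·n }. Then for every subset R ⊆ [n], P[ Σ_{i ∈ R} Σ_{j=1}^{k} x_{ij} < |R|·( k·λ − √(2k·ln(1/ρ)) ) ] ≤ ρ^{|R|}. -/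
open scoped ENNReal

noncomputable section

open Real Finset

lemma hoeffding_core (p : ℝ) (hp0 : 0 ≤ p) (hp1 : p ≤ 1) (u : ℝ) :
    p * exp ((1 - p) * u) + (1 - p) * exp (-(p * u)) ≤ exp (u ^ 2 / 8) := by
  set F : ℝ → ℝ := fun u => p * exp ((1 - p) * u) + (1 - p) * exp (-(p * u)) with hF
  set G : ℝ → ℝ := fun u => p * (1 - p) * (exp ((1 - p) * u) - exp (-(p * u))) with hG
  have hFpos : ∀ x, 0 < F x := by
    intro x
    have h1 := exp_pos ((1 - p) * x)
    have h2 := exp_pos (-(p * x))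
    simp only [hF]
    rcases le_total (exp ((1 - p) * x)) (exp (-(p * x))) with h | h
    · nlinarith
    · nlinarith
  have hFd : ∀ x, HasDerivAt F (G x) x := by
    intro x
    have h1 : HasDerivAt (fun y : ℝ => (1 - p) * y) (1 - p) x := by
      simpa using (hasDerivAt_id x).const_mul (1 - p)
    have h2 : HasDerivAt (fun y : ℝ => -(p * y)) (-p) x := by
      simpa [Pi.neg_def] using ((hasDerivAt_id x).const_mul p).neg
    have e1 := (h1.exp.const_mul p)
    have e2 := (h2.exp.const_mul (1 - p))
    have := e1.add e2
    refine this.congr_deriv ?_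
    simp only [hG]; ring
  have hGd : ∀ x, HasDerivAt G (p * (1-p) * ((1-p) * exp ((1-p)*x) + p * exp (-(p*x)))) x := by
    intro x
    have h1 : HasDerivAt (fun y : ℝ => (1 - p) * y) (1 - p) x := by
      simpa using (hasDerivAt_id x).const_mul (1 - p)
    have h2 : HasDerivAt (fun y : ℝ => -(p * y)) (-p) x := by
      simpa [Pi.neg_def] using ((hasDerivAt_id x).const_mul p).neg
    have := ((h1.exp.sub h2.exp).const_mul (p * (1 - p)))
    refine this.congr_deriv ?_
    ring
  -- ψ = deriv of (u^2/8 - log (F u))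
  set ψ : ℝ → ℝ := fun x => x / 4 - G x / F x with hψ
  have hψd : ∀ x, HasDerivAt ψ
      (1/4 - ((p * (1-p) * ((1-p) * exp ((1-p)*x) + p * exp (-(p*x)))) * F x - G x * G x) / (F x)^2) x := by
    intro x
    have h1 : HasDerivAt (fun y : ℝ => y / 4) (1/4) x := by
      simpa using (hasDerivAt_id x).div_const 4
    exact h1.sub (((hGd x).div (hFd x) (ne_of_gt (hFpos x))))
  have hψmono : Monotone ψ := by
    apply monotone_of_deriv_nonneg
    · intro x; exact (hψd x).differentiableAt
    · intro x
      rw [(hψd x).deriv]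
      have hA := exp_pos ((1 - p) * x)
      have hB := exp_pos (-(p * x))
      have hF2 : (0:ℝ) < (F x)^2 := pow_pos (hFpos x) 2
      have key : ((p * (1-p) * ((1-p) * exp ((1-p)*x) + p * exp (-(p*x)))) * F x - G x * G x)
          ≤ (F x)^2 / 4 := by
        have expand : ((p * (1-p) * ((1-p) * exp ((1-p)*x) + p * exp (-(p*x)))) * F x - G x * G x)
            = p * (1 - p) * (exp ((1-p)*x) * exp (-(p*x))) := by
          simp only [hF, hG]; ring
        rw [expand]
        have sq : (F x)^2 - 4 * (p * (1 - p) * (exp ((1-p)*x) * exp (-(p*x))))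
            = (p * exp ((1-p)*x) - (1-p) * exp (-(p*x)))^2 := by
          simp only [hF]; ring
        nlinarith [sq_nonneg (p * exp ((1-p)*x) - (1-p) * exp (-(p*x)))]
      have : ((p * (1-p) * ((1-p) * exp ((1-p)*x) + p * exp (-(p*x)))) * F x - G x * G x) / (F x)^2
          ≤ 1/4 := by
        rw [div_le_iff₀ hF2]; linarith
      linarith
  have hψ0 : ψ 0 = 0 := by simp [hψ, hG]
  set φ : ℝ → ℝ := fun x => x^2/8 - Real.log (F x) with hφ
  have hφd : ∀ x, HasDerivAt φ (ψ x) x := by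
    intro x
    have h1 : HasDerivAt (fun y : ℝ => y^2/8) (x/4) x := by
      have := (hasDerivAt_pow 2 x).div_const 8
      refine this.congr_deriv ?_; norm_num; ring
    have h2 : HasDerivAt (fun y => Real.log (F y)) (G x / F x) x :=
      (hFd x).log (ne_of_gt (hFpos x))
    exact h1.sub h2
  have hφ0 : φ 0 = 0 := by simp [hφ, hF]
  have hφnonneg : ∀ x, 0 ≤ φ x := by
    intro x
    rcases le_total 0 x with hx | hx
    · have : MonotoneOn φ (Set.Ici 0) := by
        apply monotoneOn_of_deriv_nonneg (convex_Ici 0)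
        · exact fun y _ => ((hφd y).differentiableAt).continuousAt.continuousWithinAt
        · exact fun y _ => ((hφd y).differentiableAt).differentiableWithinAt
        · intro y hy
          rw [(hφd y).deriv]
          rw [interior_Ici] at hy
          calc (0:ℝ) = ψ 0 := hψ0.symm
            _ ≤ ψ y := hψmono (le_of_lt hy)
      have := this (Set.self_mem_Ici) (Set.mem_Ici.2 hx) hx
      linarith [hφ0]
    · have : AntitoneOn φ (Set.Iic 0) := by
        apply antitoneOn_of_deriv_nonpos (convex_Iic 0)
        · exact fun y _ => ((hφd y).differentiableAt).continuousAt.continuousWithinAt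
        · exact fun y _ => ((hφd y).differentiableAt).differentiableWithinAt
        · intro y hy
          rw [(hφd y).deriv]
          rw [interior_Iic] at hy
          calc ψ y ≤ ψ 0 := hψmono (le_of_lt hy)
            _ = 0 := hψ0
      have := this (Set.mem_Iic.2 hx) (Set.self_mem_Iic) hx
      linarith [hφ0]
  have := hφnonneg u
  have hlog : Real.log (F u) ≤ u^2/8 := by simp only [hφ] at this; linarith
  calc F u = exp (Real.log (F u)) := (exp_log (hFpos u)).symm
    _ ≤ exp (u^2/8) := exp_le_exp.2 hlog


lemma two_point (p a b θ : ℝ) (hp0 : 0 ≤ p) (hp1 : p ≤ 1) (hab : a ≤ b) (hd : b - a ≤ 2) :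
    p * exp (θ * b) + (1 - p) * exp (θ * a) ≤
      exp (θ * (p * b + (1 - p) * a) + θ ^ 2 / 2) := by
  set μ := p * b + (1 - p) * a with hμ
  set u := θ * (b - a) with hu
  have h1 : θ * b = θ * μ + (1 - p) * u := by simp only [hμ, hu]; ring
  have h2 : θ * a = θ * μ + (-(p * u)) := by simp only [hμ, hu]; ring
  have heq : p * exp (θ * b) + (1 - p) * exp (θ * a)
      = exp (θ * μ) * (p * exp ((1 - p) * u) + (1 - p) * exp (-(p * u))) := by
    rw [h1, h2, exp_add, exp_add]; ring
  rw [heq]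
  have hcore := hoeffding_core p hp0 hp1 u
  have hub : u ^ 2 / 8 ≤ θ ^ 2 / 2 := by
    have : u ^ 2 = θ ^ 2 * (b - a) ^ 2 := by simp only [hu]; ring
    have h4 : (b - a) ^ 2 ≤ 4 := by nlinarith [sub_nonneg.2 hab]
    nlinarith [mul_le_mul_of_nonneg_left h4 (sq_nonneg θ)]
  calc exp (θ * μ) * (p * exp ((1 - p) * u) + (1 - p) * exp (-(p * u)))
      ≤ exp (θ * μ) * exp (u ^ 2 / 8) := by
        apply mul_le_mul_of_nonneg_left hcore (exp_pos _).le
    _ ≤ exp (θ * μ) * exp (θ ^ 2 / 2) := by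
        apply mul_le_mul_of_nonneg_left (exp_le_exp.2 hub) (exp_pos _).le
    _ = exp (θ * μ + θ ^ 2 / 2) := (exp_add _ _).symm

lemma key_mgf (θ : ℝ) : ∀ (r : ℕ) {α : Type} [DecidableEq α] (U R : Finset α) (m : ℕ),
    R ⊆ U → R.card = r →
    ∑ Z ∈ U.powersetCard m, Real.exp (θ * (2 * ((Z ∩ R).card : ℝ) - r))
      ≤ (U.card.choose m : ℝ) *
        Real.exp (θ * r * ((2 * m - U.card) / U.card) + θ ^ 2 * r / 2) := by
  intro r
  induction r with
  | zero =>
    intro α _ U R m hsub hcard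
    have hR : R = ∅ := Finset.card_eq_zero.mp hcard
    subst hR
    simp [Finset.inter_empty, Finset.sum_const, Finset.card_powersetCard]
  | succ r ih =>
    intro α _ U R m hsub hcard
    have hRne : R.Nonempty := Finset.card_pos.mp (by omega)
    obtain ⟨i₀, hi₀R⟩ := hRne
    have hi₀U : i₀ ∈ U := hsub hi₀R
    set U' := U.erase i₀ with hU'def
    set R' := R.erase i₀ with hR'def
    have hU : U = insert i₀ U' := (Finset.insert_erase hi₀U).symm
    have hi₀U' : i₀ ∉ U' := Finset.notMem_erase _ _
    have hR'sub : R' ⊆ U' := Finset.erase_subset_erase _ hsub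
    have hR'card : R'.card = r := by
      rw [hR'def, Finset.card_erase_of_mem hi₀R, hcard]; omega
    have hUcard : U.card = U'.card + 1 := by
      rw [hU, Finset.card_insert_of_notMem hi₀U']
    have hrn' : r ≤ U'.card := hR'card ▸ Finset.card_le_card hR'sub
    by_cases hmU : m ≤ U.card
    swap
    · rw [Finset.powersetCard_eq_empty.mpr (by omega)]
      simp only [Finset.sum_empty]
      positivity
    cases m with
    | zero =>
      rw [Finset.powersetCard_zero, Finset.sum_singleton]
      have hn1 : (1:ℕ) ≤ U.card := by omega
      have hn0 : (U.card : ℝ) ≠ 0 := Nat.cast_ne_zero.mpr (by omega)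
      have h1 : ((∅ : Finset α) ∩ R).card = 0 := by simp
      rw [h1]
      have hch : (U.card.choose 0 : ℝ) = 1 := by simp
      rw [hch, one_mul]
      apply Real.exp_le_exp.mpr
      have : (2 * (0:ℕ) - (U.card:ℝ)) / U.card = -1 := by
        push_cast
        field_simp
        ring
      rw [this]
      push_cast
      nlinarith [sq_nonneg θ, Nat.cast_nonneg (α := ℝ) r]
    | succ m' =>
      -- abbreviations
      set n' : ℕ := U'.card with hn'def
      have hnn : U.card = n' + 1 := hUcard
      have hm'n : m' + 1 ≤ n' + 1 := hnn ▸ hmU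
      -- split the powerset sum
      have hsplit : U.powersetCard (m' + 1)
          = U'.powersetCard (m' + 1) ∪ (U'.powersetCard m').image (insert i₀) := by
        conv_lhs => rw [hU]
        exact Finset.powersetCard_succ_insert hi₀U' m'
      have hdisj : Disjoint (U'.powersetCard (m' + 1))
          ((U'.powersetCard m').image (insert i₀)) := by
        rw [Finset.disjoint_left]
        rintro Z hZ1 hZ2
        obtain ⟨Z', hZ', rfl⟩ := Finset.mem_image.mp hZ2
        have : insert i₀ Z' ⊆ U' := (Finset.mem_powersetCard.mp hZ1).1
        exact hi₀U' (this (Finset.mem_insert_self _ _))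
      have hinj : ∀ x ∈ U'.powersetCard m', ∀ y ∈ U'.powersetCard m',
          insert i₀ x = insert i₀ y → x = y := by
        intro x hx y hy hxy
        have hix : i₀ ∉ x := fun h => hi₀U' ((Finset.mem_powersetCard.mp hx).1 h)
        have hiy : i₀ ∉ y := fun h => hi₀U' ((Finset.mem_powersetCard.mp hy).1 h)
        rw [← Finset.erase_insert hix, hxy, Finset.erase_insert hiy]
      rw [hsplit, Finset.sum_union hdisj, Finset.sum_image hinj]
      push_cast
      -- rewrite the two sums
      have hsum1 : ∑ Z ∈ U'.powersetCard (m' + 1), rexp (θ * (2 * ((Z ∩ R).card : ℝ) - (r+1)))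
          = rexp (-θ) * ∑ Z ∈ U'.powersetCard (m' + 1), rexp (θ * (2 * ((Z ∩ R').card : ℝ) - r)) := by
        rw [Finset.mul_sum]
        apply Finset.sum_congr rfl
        intro Z hZ
        have hiZ : i₀ ∉ Z := fun h => hi₀U' ((Finset.mem_powersetCard.mp hZ).1 h)
        have hZR : Z ∩ R = Z ∩ R' := by
          ext j
          simp only [Finset.mem_inter, hR'def, Finset.mem_erase]
          exact ⟨fun ⟨h1, h2⟩ => ⟨h1, fun he => hiZ (he ▸ h1), h2⟩,
                 fun ⟨h1, _, h3⟩ => ⟨h1, h3⟩⟩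
        rw [hZR, ← Real.exp_add]
        congr 1
        push_cast
        ring
      have hsum2 : ∑ Z ∈ U'.powersetCard m', rexp (θ * (2 * (((insert i₀ Z) ∩ R).card : ℝ) - (r+1)))
          = rexp θ * ∑ Z ∈ U'.powersetCard m', rexp (θ * (2 * ((Z ∩ R').card : ℝ) - r)) := by
        rw [Finset.mul_sum]
        apply Finset.sum_congr rfl
        intro Z hZ
        have hiZ : i₀ ∉ Z := fun h => hi₀U' ((Finset.mem_powersetCard.mp hZ).1 h)
        have hZR : (insert i₀ Z) ∩ R = insert i₀ (Z ∩ R') := by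
          ext j
          simp only [Finset.mem_inter, Finset.mem_insert, hR'def, Finset.mem_erase]
          constructor
          · rintro ⟨h1 | h1, h2⟩
            · exact Or.inl h1
            · exact Or.inr ⟨h1, fun he => hiZ (he ▸ h1), h2⟩
          · rintro (rfl | ⟨h1, _, h3⟩)
            · exact ⟨Or.inl rfl, hi₀R⟩
            · exact ⟨Or.inr h1, h3⟩
        have hiZR : i₀ ∉ Z ∩ R' := fun h => hiZ (Finset.mem_inter.mp h).1
        rw [hZR, Finset.card_insert_of_notMem hiZR, ← Real.exp_add]
        congr 1
        push_cast
        ring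
      rw [hsum1, hsum2]
      -- apply induction hypothesis
      have ih1 := ih U' R' (m' + 1) hR'sub hR'card
      have ih2 := ih U' R' m' hR'sub hR'card
      rw [← hn'def] at ih1 ih2
      push_cast at ih1 ih2
      have step1 : rexp (-θ) * ∑ Z ∈ U'.powersetCard (m' + 1), rexp (θ * (2 * ((Z ∩ R').card : ℝ) - r))
            + rexp θ * ∑ Z ∈ U'.powersetCard m', rexp (θ * (2 * ((Z ∩ R').card : ℝ) - r))
          ≤ rexp (-θ) * ((n'.choose (m'+1) : ℝ) * rexp (θ * r * ((2 * (m'+1) - n') / n') + θ ^ 2 * r / 2))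
            + rexp θ * ((n'.choose m' : ℝ) * rexp (θ * r * ((2 * m' - n') / n') + θ ^ 2 * r / 2)) := by
        exact add_le_add (mul_le_mul_of_nonneg_left ih1 (Real.exp_pos _).le)
          (mul_le_mul_of_nonneg_left ih2 (Real.exp_pos _).le)
      refine le_trans step1 ?_
      -- now purely numeric
      set N : ℝ := ((#U : ℕ) : ℝ) with hNdef
      have hNval : N = (n' : ℝ) + 1 := by rw [hNdef, hnn]; push_cast; ring
      have hNpos : (0:ℝ) < N := by rw [hNval]; exact Nat.cast_add_one_pos n'
      set c : ℝ := (((#U).choose (m' + 1) : ℕ) : ℝ) with hcdef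
      set c1 : ℝ := ((n'.choose (m' + 1) : ℕ) : ℝ) with hc1def
      set c2 : ℝ := ((n'.choose m' : ℕ) : ℝ) with hc2def
      have hpascal : c = c1 + c2 := by
        rw [hcdef, hc1def, hc2def, hnn, Nat.choose_succ_succ]
        push_cast; ring
      have hfactor : N * c2 = ((m':ℝ) + 1) * c := by
        have h := Nat.add_one_mul_choose_eq n' m'
        have h' : ((n' + 1 : ℕ) : ℝ) * (n'.choose m' : ℝ)
            = ((n' + 1).choose (m' + 1) : ℝ) * ((m' + 1 : ℕ) : ℝ) := by exact_mod_cast h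
        rw [hNdef, hcdef, hc2def, hnn]
        push_cast at h' ⊢
        linarith
      set p : ℝ := ((m':ℝ) + 1) / N with hpdef
      have hp0 : 0 ≤ p := by rw [hpdef]; exact div_nonneg (by linarith [Nat.cast_nonneg (α := ℝ) m']) hNpos.le
      have hp1 : p ≤ 1 := by
        rw [hpdef, div_le_one hNpos, hNval]
        have : (m' : ℝ) + 1 ≤ (n' : ℝ) + 1 := by exact_mod_cast hm'n
        linarith
      have hc2p : c2 = p * c := by
        rw [hpdef]
        field_simp
        linarith [hfactor]
      have hc1p : c1 = (1 - p) * c := by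
        have : c1 = c - c2 := by linarith [hpascal]
        rw [this, hc2p]; ring
      set b : ℝ := 1 + (r:ℝ) * ((2 * (m':ℝ) - n') / n') with hbdef
      set a : ℝ := -1 + (r:ℝ) * ((2 * ((m':ℝ) + 1) - n') / n') with hadef
      have hcases : (n' = 0 ∧ r = 0) ∨ 0 < n' := by omega
      have hab : a ≤ b ∧ b - a ≤ 2 := by
        rcases hcases with ⟨hn0, hr0⟩ | hn0
        · have hr0' : (r:ℝ) = 0 := by exact_mod_cast hr0
          rw [hadef, hbdef, hr0']
          norm_num
        · have hn0' : ((n':ℝ)) ≠ 0 := by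
            have : 0 < (n' : ℝ) := by exact_mod_cast hn0
            linarith
          have hr_le : (r : ℝ) ≤ (n' : ℝ) := by exact_mod_cast hrn'
          have hdiff : b - a = 2 - 2 * (r:ℝ) / n' := by
            rw [hbdef, hadef]; field_simp; ring
          have hnpos : (0:ℝ) < (n':ℝ) := by exact_mod_cast hn0
          constructor
          · rw [← sub_nonneg, hdiff]
            have : 2 * (r:ℝ) / n' ≤ 2 := by
              rw [div_le_iff₀ hnpos]
              linarith
            linarith
          · rw [hdiff]
            have : 0 ≤ 2 * (r:ℝ) / n' := div_nonneg (mul_nonneg zero_le_two (Nat.cast_nonneg _)) (Nat.cast_nonneg _)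
            linarith
      have hmean : p * b + (1 - p) * a = ((r:ℝ) + 1) * ((2 * ((m':ℝ) + 1) - N) / N) := by
        rcases hcases with ⟨hn0, hr0⟩ | hn0
        · have hm0 : m' = 0 := by omega
          have hr0' : (r:ℝ) = 0 := by exact_mod_cast hr0
          have hn0' : (n':ℝ) = 0 := by exact_mod_cast hn0
          have hm0' : (m':ℝ) = 0 := by exact_mod_cast hm0
          rw [hpdef, hbdef, hadef, hNval, hr0', hn0', hm0']
          norm_num
        · have hn0' : ((n':ℝ)) ≠ 0 := by
            have : 0 < (n' : ℝ) := by exact_mod_cast hn0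
            linarith
          have hN0 : N ≠ 0 := ne_of_gt hNpos
          rw [hpdef, hbdef, hadef, hNval]
          field_simp
          ring
      have h2p := two_point p a b θ hp0 hp1 hab.1 hab.2
      have hexp1 : rexp (-θ) * rexp (θ * r * ((2 * ((m':ℝ) + 1) - n') / n') + θ ^ 2 * r / 2)
          = rexp (θ * a) * rexp (θ ^ 2 * r / 2) := by
        rw [← Real.exp_add, ← Real.exp_add]
        congr 1
        rw [hadef]; ring
      have hexp2 : rexp θ * rexp (θ * r * ((2 * (m':ℝ) - n') / n') + θ ^ 2 * r / 2)
          = rexp (θ * b) * rexp (θ ^ 2 * r / 2) := by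
        rw [← Real.exp_add, ← Real.exp_add]
        congr 1
        rw [hbdef]; ring
      calc rexp (-θ) * (c1 * rexp (θ * ↑r * ((2 * (↑m' + 1) - ↑n') / ↑n') + θ ^ 2 * ↑r / 2)) +
            rexp θ * (c2 * rexp (θ * ↑r * ((2 * ↑m' - ↑n') / ↑n') + θ ^ 2 * ↑r / 2))
          = c * rexp (θ ^ 2 * r / 2) *
              (p * rexp (θ * b) + (1 - p) * rexp (θ * a)) := by
            rw [hc1p, hc2p]
            calc rexp (-θ) * ((1-p) * c * rexp (θ * ↑r * ((2 * (↑m' + 1) - ↑n') / ↑n') + θ ^ 2 * ↑r / 2)) +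
                  rexp θ * (p * c * rexp (θ * ↑r * ((2 * ↑m' - ↑n') / ↑n') + θ ^ 2 * ↑r / 2))
                = (1-p) * c * (rexp (-θ) * rexp (θ * ↑r * ((2 * ((m':ℝ) + 1) - ↑n') / ↑n') + θ ^ 2 * ↑r / 2)) +
                  p * c * (rexp θ * rexp (θ * ↑r * ((2 * (m':ℝ) - ↑n') / ↑n') + θ ^ 2 * ↑r / 2)) := by ring
              _ = (1-p) * c * (rexp (θ * a) * rexp (θ ^ 2 * r / 2)) +
                  p * c * (rexp (θ * b) * rexp (θ ^ 2 * r / 2)) := by rw [hexp1, hexp2]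
              _ = c * rexp (θ ^ 2 * r / 2) * (p * rexp (θ * b) + (1 - p) * rexp (θ * a)) := by ring
        _ ≤ c * rexp (θ ^ 2 * r / 2) * rexp (θ * (p * b + (1 - p) * a) + θ ^ 2 / 2) := by
            apply mul_le_mul_of_nonneg_left h2p
            positivity
        _ = c * rexp (θ * (↑r + 1) * ((2 * (↑m' + 1) - N) / N) + θ ^ 2 * (↑r + 1) / 2) := by
            rw [hmean, mul_assoc, ← Real.exp_add]
            congr 2
            ring

lemma pmVal_sum {n : ℕ} (S : Finset (Fin n)) (z : Fin n → Bool) :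
    ∑ i ∈ S, pmVal (z i) = 2 * ((S.filter (fun i => z i)).card : ℝ) - S.card := by
  have h : ∀ i, pmVal (z i) = 2 * (if z i then (1:ℝ) else 0) - 1 := by
    intro i; cases h : z i <;> simp [pmVal, h] <;> norm_num
  calc ∑ i ∈ S, pmVal (z i) = ∑ i ∈ S, (2 * (if z i then (1:ℝ) else 0) - 1) :=
        Finset.sum_congr rfl (fun i _ => h i)
    _ = 2 * (∑ i ∈ S, if z i then (1:ℝ) else 0) - S.card := by
        rw [Finset.sum_sub_distrib, Finset.mul_sum, Finset.sum_const]
        simp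
    _ = 2 * ((S.filter (fun i => z i)).card : ℝ) - S.card := by
        rw [Finset.sum_boole]

lemma transport (n : ℕ) (m : ℕ) (lam : ℝ) (h2m : 2 * (m:ℝ) - n = lam * n)
    (R : Finset (Fin n)) (θ : ℝ)
    (A : Finset (Fin n → Bool))
    (hA : A = Finset.univ.filter (fun z => ∑ i, pmVal (z i) = lam * n)) :
    ∑ z ∈ A, rexp (θ * ∑ i ∈ R, pmVal (z i))
      = ∑ Z ∈ (Finset.univ : Finset (Fin n)).powersetCard m,
          rexp (θ * (2 * ((Z ∩ R).card : ℝ) - R.card)) := by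
  apply Finset.sum_nbij' (i := fun z => Finset.univ.filter (fun i => z i))
    (j := fun Z => fun i => decide (i ∈ Z))
  · intro z hz
    rw [Finset.mem_powersetCard]
    refine ⟨Finset.filter_subset _ _, ?_⟩
    rw [hA, Finset.mem_filter] at hz
    have := hz.2
    rw [show (∑ i, pmVal (z i)) = ∑ i ∈ Finset.univ, pmVal (z i) from rfl, pmVal_sum] at this
    have hcard : (Finset.univ : Finset (Fin n)).card = n := by simp
    rw [hcard] at this
    have : 2 * (((Finset.univ.filter (fun i => z i)).card : ℕ) : ℝ) = 2 * (m : ℝ) := by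
      linarith [h2m]
    have := mul_left_cancel₀ (two_ne_zero (α := ℝ)) this
    exact_mod_cast this
  · intro Z hZ
    rw [hA, Finset.mem_filter]
    refine ⟨Finset.mem_univ _, ?_⟩
    rw [show (∑ i, pmVal (decide (i ∈ Z))) = ∑ i ∈ Finset.univ,
      pmVal ((fun i => decide (i ∈ Z)) i) from rfl, pmVal_sum]
    have h1 : Finset.univ.filter (fun i => decide (i ∈ Z)) = Z := by
      ext i; simp
    rw [Finset.mem_powersetCard] at hZ
    rw [h1, hZ.2]
    simpa using h2m
  · intro z _; funext i; simp
  · intro Z _; ext i; simp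
  · intro z _
    congr 1
    have h1 : Finset.univ.filter (fun i => z i) ∩ R = R.filter (fun i => z i) := by
      ext i; simp [and_comm]
    rw [h1, pmVal_sum]

lemma transport_card (n : ℕ) (m : ℕ) (lam : ℝ) (h2m : 2 * (m:ℝ) - n = lam * n)
    (A : Finset (Fin n → Bool))
    (hA : A = Finset.univ.filter (fun z => ∑ i, pmVal (z i) = lam * n)) :
    A.card = n.choose m := by
  have h := transport n m lam h2m ∅ 0 A hA
  simp only [mul_comm, zero_mul, mul_zero, Real.exp_zero] at h
  rw [Finset.sum_const, Finset.sum_const, Finset.card_powersetCard] at h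
  simpa using h

lemma decouple (n k : ℕ) (A : Finset (Fin n → Bool)) (f : (Fin n → Bool) → ℝ)
    (T : Finset (Fin n → Fin k → Bool))
    (hT : ∀ X, X ∈ T ↔ ∀ j, (fun i => X i j) ∈ A) :
    ∑ X ∈ T, ∏ j, f (fun i => X i j) = (∑ z ∈ A, f z) ^ k := by
  have h1 : (∑ z ∈ A, f z) ^ k = ∏ _j : Fin k, ∑ z ∈ A, f z := by
    rw [Finset.prod_const, Finset.card_univ, Fintype.card_fin]
  rw [h1, Finset.prod_univ_sum]
  apply Finset.sum_nbij' (i := fun X => fun j i => X i j) (j := fun g => fun i j => g j i)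
  · intro X hX
    rw [Fintype.mem_piFinset]
    exact (hT X).1 hX
  · intro g hg
    rw [hT]
    intro j
    exact (Fintype.mem_piFinset.1 hg) j
  · intro X _; rfl
  · intro g _; rfl
  · intro X _; rfl


set_option maxHeartbeats 2000000 in
/-- Hoeffding bound for positively correlated entries: let the `k` columns of
`X ∈ {±1}^{n×k}` be mutually independent, each uniform over
`{z ∈ {±1}^n : Σᵢ zᵢ = λn}` (equivalently, `X` is uniform over the set `T` of matrices
all of whose column sums equal `λn`). Then for every `R ⊆ [n]`,
`P[Σ_{i ∈ R} Σ_{j=1}^k x_{ij} < |R|·(kλ - √(2k·ln(1/ρ)))] ≤ ρ^{|R|}`. -/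
theorem correlated_sum_bound (n k : ℕ)
    (lam : ℝ) (hlam : lam ∈ Set.Icc (0:ℝ) 1)
    (hint : ∃ s : ℤ, (lam * n : ℝ) = (s : ℝ) ∧ s % 2 = (n : ℤ) % 2)
    (ρ : ℝ) (hρ : ρ ∈ Set.Ioo (0:ℝ) 1)
    (T : Finset (Fin n → Fin k → Bool))
    (hT : T = Finset.univ.filter (fun X => ∀ j : Fin k, ∑ i, pmVal (X i j) = lam * n))
    (hTne : T.Nonempty) (R : Finset (Fin n)) :
    (PMF.uniformOfFinset T hTne).toOuterMeasure
        {X | ∑ i ∈ R, ∑ j, pmVal (X i j) <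
              (R.card : ℝ) * (k * lam - Real.sqrt (2 * k * Real.log (1 / ρ)))} ≤
      ENNReal.ofReal (ρ ^ R.card) := by
  classical
  obtain ⟨hlam0, hlam1⟩ := hlam
  obtain ⟨hρ0, hρ1⟩ := hρ
  set S : Set (Fin n → Fin k → Bool) := {X | ∑ i ∈ R, ∑ j, pmVal (X i j) <
      (R.card : ℝ) * (k * lam - Real.sqrt (2 * k * Real.log (1 / ρ)))} with hSdef
  rw [PMF.toOuterMeasure_uniformOfFinset_apply]
  have hTpos : 0 < T.card := Finset.card_pos.mpr hTne
  have hρRpos : 0 < ρ ^ R.card := pow_pos hρ0 _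
  suffices hreal : (((T.filter (· ∈ S)).card : ℝ)) ≤ ρ ^ R.card * T.card by
    rw [ENNReal.div_le_iff (by exact_mod_cast hTpos.ne' : ((T.card : ℕ) : ℝ≥0∞) ≠ 0)
      (ENNReal.natCast_ne_top _)]
    calc ((T.filter (· ∈ S)).card : ℝ≥0∞)
        = ENNReal.ofReal (((T.filter (· ∈ S)).card : ℝ)) := (ENNReal.ofReal_natCast _).symm
      _ ≤ ENNReal.ofReal (ρ ^ R.card * T.card) := ENNReal.ofReal_le_ofReal hreal
      _ = ENNReal.ofReal (ρ ^ R.card) * ENNReal.ofReal ((T.card : ℝ)) :=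
          ENNReal.ofReal_mul (le_of_lt hρRpos)
      _ = ENNReal.ofReal (ρ ^ R.card) * ((T.card : ℕ) : ℝ≥0∞) := by rw [ENNReal.ofReal_natCast]
  rcases Finset.eq_empty_or_nonempty R with rfl | hRne
  · simp only [Finset.card_empty, pow_zero, one_mul]
    exact_mod_cast Finset.card_le_card (Finset.filter_subset _ _)
  rcases Nat.eq_zero_or_pos k with rfl | hk
  · have hempty : T.filter (· ∈ S) = ∅ := by
      apply Finset.filter_false_of_mem
      intro X _
      rw [hSdef]
      simp only [Set.mem_setOf_eq, not_lt]
      have h0 : ∀ i : Fin n, ∑ j : Fin 0, pmVal (X i j) = 0 := by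
        intro i; simp
      rw [Finset.sum_congr rfl (fun i _ => h0 i), Finset.sum_const_zero]
      norm_num
    rw [hempty]
    simp only [Finset.card_empty, Nat.cast_zero]
    positivity
  obtain ⟨i⟩ := hRne
  have hn : 0 < n := i.pos
  obtain ⟨s₀, hs₀, hpar⟩ := hint
  have hs00 : (0:ℝ) ≤ (s₀:ℝ) := by rw [← hs₀]; positivity
  have hs0n : (s₀:ℝ) ≤ (n:ℝ) := by
    rw [← hs₀]
    nlinarith [Nat.cast_nonneg (α := ℝ) n]
  have hs00' : (0:ℤ) ≤ s₀ := by exact_mod_cast hs00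
  have hs0n' : s₀ ≤ (n:ℤ) := by exact_mod_cast hs0n
  have hdvd : (2:ℤ) ∣ (s₀ + n) := by omega
  set M : ℤ := (s₀ + n) / 2 with hMdef
  have hM2 : 2 * M = s₀ + n := by omega
  have hM0 : 0 ≤ M := by omega
  have hMn : M ≤ (n:ℤ) := by omega
  set m : ℕ := M.toNat with hmdef
  have hmM : ((m:ℕ):ℤ) = M := Int.toNat_of_nonneg hM0
  have h2m : 2 * (m:ℝ) - n = lam * n := by
    have h1 : ((2*M:ℤ):ℝ) = (s₀:ℝ) + n := by exact_mod_cast hM2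
    have hmr : (m:ℝ) = (M:ℝ) := by exact_mod_cast hmM
    push_cast at h1
    rw [hmr, hs₀]
    linarith
  set r : ℕ := R.card with hrdef
  set L : ℝ := Real.log (1/ρ) with hLdef
  have hL : 0 < L := Real.log_pos (by rw [lt_div_iff₀ hρ0]; linarith)
  set c : ℝ := Real.sqrt (2*k*L) with hcdef
  have hc0 : 0 < c := Real.sqrt_pos.mpr (by positivity)
  have hc2 : c^2 = 2*k*L := Real.sq_sqrt (by positivity)
  have hk0 : ((k:ℕ):ℝ) ≠ 0 := Nat.cast_ne_zero.mpr hk.ne'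
  set s : ℝ := c / k with hsdef
  have hs0 : 0 < s := div_pos hc0 (by exact_mod_cast hk)
  set θ : ℝ := -s with hθdef
  set A : Finset (Fin n → Bool) :=
    Finset.univ.filter (fun z => ∑ i, pmVal (z i) = lam*n) with hAdef
  have hTmem : ∀ X, X ∈ T ↔ ∀ j, (fun i => X i j) ∈ A := by
    intro X
    rw [hT, Finset.mem_filter, hAdef]
    simp only [Finset.mem_filter, Finset.mem_univ, true_and]
  have hkey : ∑ z ∈ A, rexp (θ * ∑ i ∈ R, pmVal (z i))
      ≤ (A.card : ℝ) * rexp (θ * r * lam + θ^2 * r / 2) := by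
    rw [transport n m lam h2m R θ A hAdef]
    have h := key_mgf θ r Finset.univ R m (Finset.subset_univ R) hrdef.symm
    have hcardu : (Finset.univ : Finset (Fin n)).card = n := by simp
    rw [hcardu] at h
    have hlameq : ((2*(m:ℝ) - n)/n) = lam := by
      rw [h2m]
      field_simp
    rw [hlameq] at h
    rw [transport_card n m lam h2m A hAdef]
    exact h
  have hfA : (0:ℝ) ≤ ∑ z ∈ A, rexp (θ * ∑ i ∈ R, pmVal (z i)) :=
    Finset.sum_nonneg fun z _ => (exp_pos _).le
  have hTsum : ∑ X ∈ T, ∏ j, rexp (θ * ∑ i ∈ R, pmVal (X i j))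
      = (∑ z ∈ A, rexp (θ * ∑ i ∈ R, pmVal (z i)))^k :=
    decouple n k A (fun z => rexp (θ * ∑ i ∈ R, pmVal (z i))) T hTmem
  have hTcard : ((T.card : ℝ)) = ((A.card:ℝ))^k := by
    have := decouple n k A (fun _ => (1:ℝ)) T hTmem
    simp only [Finset.prod_const_one, Finset.sum_const, nsmul_eq_mul, mul_one] at this
    exact this
  set a : ℝ := (r:ℝ) * (k*lam - c) with hadef2
  have haeq : (R.card:ℝ) * ((k:ℝ)*lam - Real.sqrt (2*(k:ℝ)*Real.log (1/ρ))) = a := by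
    rw [hadef2, hcdef, hLdef, hrdef]
  have hbound : ∀ X ∈ T.filter (· ∈ S), (1:ℝ) ≤
      rexp (s * (a - ∑ i ∈ R, ∑ j, pmVal (X i j))) := by
    intro X hX
    have hXS : X ∈ S := (Finset.mem_filter.mp hX).2
    rw [hSdef] at hXS
    simp only [Set.mem_setOf_eq] at hXS
    have : 0 ≤ s * (a - ∑ i ∈ R, ∑ j, pmVal (X i j)) :=
      mul_nonneg hs0.le (by linarith)
    calc (1:ℝ) = rexp 0 := (Real.exp_zero).symm
      _ ≤ rexp (s * (a - ∑ i ∈ R, ∑ j, pmVal (X i j))) := Real.exp_le_exp.2 this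
  have hchain : (((T.filter (· ∈ S)).card : ℝ)) ≤
      rexp (s*a) * (∑ z ∈ A, rexp (θ * ∑ i ∈ R, pmVal (z i)))^k := by
    calc (((T.filter (· ∈ S)).card : ℝ))
        = ∑ _X ∈ T.filter (· ∈ S), (1:ℝ) := by
          rw [Finset.sum_const, nsmul_eq_mul, mul_one]
      _ ≤ ∑ X ∈ T.filter (· ∈ S), rexp (s * (a - ∑ i ∈ R, ∑ j, pmVal (X i j))) :=
          Finset.sum_le_sum hbound
      _ ≤ ∑ X ∈ T, rexp (s * (a - ∑ i ∈ R, ∑ j, pmVal (X i j))) :=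
          Finset.sum_le_sum_of_subset_of_nonneg (Finset.filter_subset _ _)
            (fun X _ _ => (exp_pos _).le)
      _ = ∑ X ∈ T, rexp (s*a) * ∏ j, rexp (θ * ∑ i ∈ R, pmVal (X i j)) := by
          apply Finset.sum_congr rfl
          intro X _
          rw [← Real.exp_sum, ← Real.exp_add]
          congr 1
          have hcomm : ∑ i ∈ R, ∑ j, pmVal (X i j) = ∑ j, ∑ i ∈ R, pmVal (X i j) :=
            Finset.sum_comm
          rw [hcomm, ← Finset.mul_sum, hθdef]
          ring
      _ = rexp (s*a) * ∑ X ∈ T, ∏ j, rexp (θ * ∑ i ∈ R, pmVal (X i j)) := by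
          rw [Finset.mul_sum]
      _ = rexp (s*a) * (∑ z ∈ A, rexp (θ * ∑ i ∈ R, pmVal (z i)))^k := by rw [hTsum]
  have hpow : (∑ z ∈ A, rexp (θ * ∑ i ∈ R, pmVal (z i)))^k
      ≤ ((A.card:ℝ) * rexp (θ*r*lam + θ^2*r/2))^k := pow_le_pow_left₀ hfA hkey k
  have hexpo : s*a + (k:ℝ)*(θ*r*lam + θ^2*r/2) = -(r:ℝ)*L := by
    have h1 : s*a + (k:ℝ)*(θ*r*lam + θ^2*r/2) = (r:ℝ) * ((k:ℝ)*s^2/2 - s*c) := by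
      rw [hadef2, hθdef]; ring
    have h2 : (k:ℝ)*s^2/2 - s*c = -L := by
      rw [hsdef]
      field_simp
      nlinarith [hc2]
    rw [h1, h2]
    ring
  have hρr : rexp (-(r:ℝ)*L) = ρ^r := by
    rw [hLdef, one_div, Real.log_inv,
      show -(r:ℝ)*(-Real.log ρ) = (r:ℝ)*Real.log ρ by ring,
      Real.exp_nat_mul, Real.exp_log hρ0]
  calc (((T.filter (· ∈ S)).card : ℝ))
      ≤ rexp (s*a) * (∑ z ∈ A, rexp (θ * ∑ i ∈ R, pmVal (z i)))^k := hchain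
    _ ≤ rexp (s*a) * ((A.card:ℝ) * rexp (θ*r*lam + θ^2*r/2))^k :=
        mul_le_mul_of_nonneg_left hpow (exp_pos _).le
    _ = ((A.card:ℝ))^k * (rexp (s*a) * rexp ((k:ℝ)*(θ*r*lam + θ^2*r/2))) := by
        rw [mul_pow, ← Real.exp_nat_mul]
        ring
    _ = ((A.card:ℝ))^k * rexp (s*a + (k:ℝ)*(θ*r*lam + θ^2*r/2)) := by
        rw [← Real.exp_add]
    _ = (T.card:ℝ) * rexp (-(r:ℝ)*L) := by rw [hTcard, hexpo]
    _ = ρ^r * (T.card:ℝ) := by rw [hρr]; ring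
end
end
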